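/- Range condition for the operator on an interval with an isolated external state: for every a < 0, κ > 0, β ≥ 0, λ > 0, every continuous g : [a,0] → ℝ, and every c ∈ ℝ, there exists a twice continuously differentiable function f : [a,0] → ℝ (one-sided derivatives at the endpoints) such that λ f(x) − κ f''(x) = g(x) for all x ∈ [a,0], f'(a) = 0, and f'(0) = β ( c/λ − f(0) ). -/

import Mathlib

open Set

/-- One-sided first derivative on the interval `[a,b]`. -/
noncomputable def dIcc (a b : ℝ) (f : ℝ → ℝ) : ℝ → ℝ :=
  derivWithin f (Set.Icc a b)

/-- One-sided second derivative on the interval `[a,b]`. -/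
noncomputable def d2Icc (a b : ℝ) (f : ℝ → ℝ) : ℝ → ℝ :=
  derivWithin (derivWithin f (Set.Icc a b)) (Set.Icc a b)

/-- Range condition for the operator on an interval with an isolated external
state (case α = 0): the equation at the isolated point gives `c/λ`, and the
transmission condition at `0−` becomes a Robin boundary condition coupled to it. -/
theorem range_condition_isolated_state
    (a κ β lam c : ℝ) (ha : a < 0) (hκ : 0 < κ) (hβ : 0 ≤ β) (hlam : 0 < lam)
    (g : ℝ → ℝ) (hg : ContinuousOn g (Icc a 0)) :
    ∃ f : ℝ → ℝ,
      ContDiffOn ℝ 2 f (Icc a 0) ∧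
      (∀ x ∈ Icc a 0, lam * f x - κ * d2Icc a 0 f x = g x) ∧
      dIcc a 0 f a = 0 ∧
      dIcc a 0 f 0 = β * (c / lam - f 0) := by
  -- a continuous extension of `g` to all of `ℝ`
  set G : ℝ → ℝ := fun x => g (min 0 (max a x)) with hGdef
  have hmem : ∀ x : ℝ, min 0 (max a x) ∈ Icc a 0 := fun x =>
    ⟨le_min ha.le (le_max_left _ _), min_le_left _ _⟩
  have hGcont : Continuous G := by
    rw [hGdef]
    exact hg.comp_continuous (continuous_const.min (continuous_const.max continuous_id)) hmem
  have hGeq : ∀ x ∈ Icc a 0, G x = g x := by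
    intro x hx
    rw [hGdef]
    simp only [max_eq_right hx.1, min_eq_right hx.2]
  -- the frequency μ and the constant B = 1/(κμ)
  set μ : ℝ := Real.sqrt (lam / κ) with hμdef
  have hμ : 0 < μ := Real.sqrt_pos.2 (div_pos hlam hκ)
  have hμ2 : κ * μ ^ 2 = lam := by
    rw [hμdef, Real.sq_sqrt (div_pos hlam hκ).le]
    field_simp
  set B : ℝ := 1 / (κ * μ) with hBdef
  have hB : κ * μ * B = 1 := by
    rw [hBdef]
    field_simp
  -- the primitives
  set F1 : ℝ → ℝ := fun x => ∫ t in a..x, Real.cosh (μ * t) * G t with hF1def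
  set F2 : ℝ → ℝ := fun x => ∫ t in a..x, Real.sinh (μ * t) * G t with hF2def
  have hF1' : ∀ x : ℝ, HasDerivAt F1 (Real.cosh (μ * x) * G x) x := by
    intro x
    rw [hF1def]
    exact ((Real.continuous_cosh.comp (continuous_const.mul continuous_id)).mul
      hGcont).integral_hasStrictDerivAt a x |>.hasDerivAt
  have hF2' : ∀ x : ℝ, HasDerivAt F2 (Real.sinh (μ * x) * G x) x := by
    intro x
    rw [hF2def]
    exact ((Real.continuous_sinh.comp (continuous_const.mul continuous_id)).mul
      hGcont).integral_hasStrictDerivAt a x |>.hasDerivAt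
  -- the constant A for the Robin boundary condition
  have hD : 0 < μ * Real.sinh (μ * (0 - a)) + β * Real.cosh (μ * (0 - a)) := by
    have h1 : 0 < Real.sinh (μ * (0 - a)) :=
      Real.sinh_pos_iff.2 (mul_pos hμ (by linarith))
    have h2 : 0 < Real.cosh (μ * (0 - a)) := Real.cosh_pos _
    positivity
  set A : ℝ := (β * (c / lam - B * F2 0) + μ * B * F1 0) /
      (μ * Real.sinh (μ * (0 - a)) + β * Real.cosh (μ * (0 - a))) with hAdef
  have hAD : A * (μ * Real.sinh (μ * (0 - a)) + β * Real.cosh (μ * (0 - a)))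
      = β * (c / lam - B * F2 0) + μ * B * F1 0 := by
    rw [hAdef]
    exact div_mul_cancel₀ _ hD.ne'
  -- the solution and its first derivative
  set f : ℝ → ℝ := fun x => A * Real.cosh (μ * (x - a)) -
      B * (Real.sinh (μ * x) * F1 x - Real.cosh (μ * x) * F2 x) with hfdef
  set f1 : ℝ → ℝ := fun x => A * μ * Real.sinh (μ * (x - a)) -
      B * μ * (Real.cosh (μ * x) * F1 x - Real.sinh (μ * x) * F2 x) with hf1def
  -- elementary derivatives
  have hch : ∀ x : ℝ, HasDerivAt (fun y => Real.cosh (μ * (y - a)))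
      (Real.sinh (μ * (x - a)) * μ) x := by
    intro x
    have h1 : HasDerivAt (fun y : ℝ => μ * (y - a)) (μ * 1) x :=
      ((hasDerivAt_id x).sub_const a).const_mul μ
    exact ((Real.hasDerivAt_cosh (μ * (x - a))).comp x h1).congr_deriv
      (by ring : Real.sinh (μ * (x - a)) * (μ * 1) = Real.sinh (μ * (x - a)) * μ)
  have hsh : ∀ x : ℝ, HasDerivAt (fun y => Real.sinh (μ * (y - a)))
      (Real.cosh (μ * (x - a)) * μ) x := by
    intro x
    have h1 : HasDerivAt (fun y : ℝ => μ * (y - a)) (μ * 1) x :=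
      ((hasDerivAt_id x).sub_const a).const_mul μ
    exact ((Real.hasDerivAt_sinh (μ * (x - a))).comp x h1).congr_deriv
      (by ring : Real.cosh (μ * (x - a)) * (μ * 1) = Real.cosh (μ * (x - a)) * μ)
  have hch0 : ∀ x : ℝ, HasDerivAt (fun y => Real.cosh (μ * y))
      (Real.sinh (μ * x) * μ) x := by
    intro x
    have h1 : HasDerivAt (fun y : ℝ => μ * y) (μ * 1) x := (hasDerivAt_id x).const_mul μ
    exact ((Real.hasDerivAt_cosh (μ * x)).comp x h1).congr_deriv (by ring)
  have hsh0 : ∀ x : ℝ, HasDerivAt (fun y => Real.sinh (μ * y))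
      (Real.cosh (μ * x) * μ) x := by
    intro x
    have h1 : HasDerivAt (fun y : ℝ => μ * y) (μ * 1) x := (hasDerivAt_id x).const_mul μ
    exact ((Real.hasDerivAt_sinh (μ * x)).comp x h1).congr_deriv (by ring)
  -- f' = f1
  have hf' : ∀ x : ℝ, HasDerivAt f (f1 x) x := by
    intro x
    have h := ((hch x).const_mul A).sub
      ((((hsh0 x).mul (hF1' x)).sub ((hch0 x).mul (hF2' x))).const_mul B)
    rw [hfdef, hf1def]
    exact h.congr_deriv (Eq.symm (by beta_reduce; ring))
  -- f1' = μ² f − μ B G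
  have hf1' : ∀ x : ℝ, HasDerivAt f1 (μ ^ 2 * f x - μ * B * G x) x := by
    intro x
    have h := ((hsh x).const_mul (A * μ)).sub
      ((((hch0 x).mul (hF1' x)).sub ((hsh0 x).mul (hF2' x))).const_mul (B * μ))
    rw [hf1def]
    have hid := Real.cosh_sq_sub_sinh_sq (μ * x)
    exact h.congr_deriv (Eq.symm (by rw [hfdef]; beta_reduce; linear_combination (B * μ * G x) * hid))
  -- regularity
  have hdiff : Differentiable ℝ f := fun x => (hf' x).differentiableAt
  have hderiv : deriv f = f1 := funext fun x => (hf' x).deriv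
  have hdiff1 : Differentiable ℝ f1 := fun x => (hf1' x).differentiableAt
  have hderiv1 : deriv f1 = fun x => μ ^ 2 * f x - μ * B * G x :=
    funext fun x => (hf1' x).deriv
  have hC2 : ContDiff ℝ 2 f := by
    rw [show (2 : WithTop ℕ∞) = 1 + 1 by norm_num, contDiff_succ_iff_deriv]
    refine ⟨hdiff, by norm_num, ?_⟩
    rw [hderiv, contDiff_one_iff_deriv, hderiv1]
    exact ⟨hdiff1, (continuous_const.mul hdiff.continuous).sub
      (continuous_const.mul hGcont)⟩
  -- derivWithin facts
  have hUD : UniqueDiffOn ℝ (Icc a 0) := uniqueDiffOn_Icc ha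
  have hdW : ∀ x ∈ Icc a 0, derivWithin f (Icc a 0) x = f1 x := fun x hx =>
    ((hf' x).hasDerivWithinAt).derivWithin (hUD x hx)
  have hd2 : ∀ x ∈ Icc a 0, d2Icc a 0 f x = μ ^ 2 * f x - μ * B * G x := by
    intro x hx
    unfold d2Icc
    rw [derivWithin_congr (fun y hy => hdW y hy) (hdW x hx)]
    exact ((hf1' x).hasDerivWithinAt).derivWithin (hUD x hx)
  have hmema : a ∈ Icc a 0 := ⟨le_refl a, ha.le⟩
  have hmem0 : (0 : ℝ) ∈ Icc a 0 := ⟨ha.le, le_refl 0⟩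
  refine ⟨f, hC2.contDiffOn, ?_, ?_, ?_⟩
  · intro x hx
    rw [hd2 x hx, ← hGeq x hx]
    linear_combination (-(f x)) * hμ2 + (G x) * hB
  · unfold dIcc
    rw [hdW a hmema, hf1def]
    simp [hF1def, hF2def, intervalIntegral.integral_same]
  · unfold dIcc
    rw [hdW 0 hmem0, hf1def, hfdef]
    simp only [mul_zero, Real.sinh_zero, Real.cosh_zero, zero_mul, one_mul, zero_sub, sub_zero,
      mul_neg, neg_neg] at hAD ⊢
    linear_combination hAD
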